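/- Let C ⊆ F_q^{n×m} be a rank-metric code containing two codewords x, x' with rank(x' − x) = d. Then for all integers μ, δ, ε ≥ 0 with 2ε + μ + δ ≥ d and μ + δ + ε ≤ d, there exist r ∈ F_q^{n×m}, L̂ ∈ F_q^{n×μ} with rank L̂ = μ, and Ê ∈ F_q^{δ×m} with rank Ê = δ, such that rank [[L̂ , r − x],[0 , Ê]] = μ + δ + ε and rank [[L̂ , r − x'],[0 , Ê]] = μ + δ + (d − μ − δ − ε) ≤ μ + δ + ε. Consequently x is not the unique minimizer over C of rank [[L̂ , r − c],[0 , Ê]], so the errata pattern cannot be corrected; hence a code of minimum rank distance d cannot correct every pattern of ε errors, μ erasures and δ deviations when 2ε + μ + δ ≥ d. -/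

import Mathlib

open Matrix

section Aux

variable {F : Type*} [Field F]

/-- Pivot lemma: if a matrix has `card γ` selected columns which are "diagonal" on
selected pivot rows, and every column is a multiple of a selected column, then
its rank is `card γ`. -/
lemma rank_eq_card_of_pivot {α β γ : Type*} [Fintype α] [Fintype β] [Fintype γ]
    (A : Matrix α β F) (c : γ → β) (p : γ → α)
    (hnz : ∀ t, A (p t) (c t) ≠ 0)
    (hz : ∀ s t, s ≠ t → A (p s) (c t) = 0)
    (hcol : ∀ j, (fun i => A i j) = 0 ∨
      ∃ (t : γ) (a : F), (fun i => A i j) = a • fun i => A i (c t)) :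
    A.rank = Fintype.card γ := by
  classical
  rw [Matrix.rank_eq_finrank_span_cols]
  set v : γ → (α → F) := fun t => Aᵀ (c t) with hv
  have hli : LinearIndependent F v := by
    rw [Fintype.linearIndependent_iff]
    intro g hg t0
    have h := congrFun hg (p t0)
    simp only [Finset.sum_apply, Pi.smul_apply, Pi.zero_apply, smul_eq_mul] at h
    rw [Finset.sum_eq_single t0] at h
    · have : v t0 (p t0) = A (p t0) (c t0) := rfl
      rw [this] at h
      exact (mul_eq_zero.mp h).resolve_right (hnz t0)
    · intro s _ hs
      have : v s (p t0) = A (p t0) (c s) := rfl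
      rw [this, hz t0 s (fun hh => hs hh.symm), mul_zero]
    · intro hh; exact absurd (Finset.mem_univ t0) hh
  have hspan : Submodule.span F (Set.range Aᵀ) = Submodule.span F (Set.range v) := by
    apply le_antisymm
    · rw [Submodule.span_le]
      rintro _ ⟨j, rfl⟩
      rcases hcol j with h0 | ⟨t, a, ha⟩
      · have : Aᵀ j = 0 := by funext i; exact congrFun h0 i
        rw [this]; exact Submodule.zero_mem _
      · have : Aᵀ j = a • v t := by funext i; exact congrFun ha i
        rw [this]
        exact Submodule.smul_mem _ a (Submodule.subset_span ⟨t, rfl⟩)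
    · exact Submodule.span_mono (by rintro _ ⟨t, rfl⟩; exact ⟨c t, rfl⟩)
  change Module.finrank F (Submodule.span F (Set.range Aᵀ)) = _
  rw [hspan, finrank_span_eq_card hli]

lemma inj_mulVecLin_of_rank_eq_card {p q : Type*} [Fintype p] [Fintype q]
    (M : Matrix p q F) (h : M.rank = Fintype.card q) :
    Function.Injective M.mulVecLin := by
  classical
  rw [← LinearMap.ker_eq_bot]
  have hrn := LinearMap.finrank_range_add_finrank_ker M.mulVecLin
  rw [Module.finrank_pi] at hrn
  have hr : Module.finrank F (LinearMap.range M.mulVecLin) = Fintype.card q := h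
  have hk : Module.finrank F (LinearMap.ker M.mulVecLin) = 0 := by omega
  exact Submodule.finrank_eq_zero.mp hk

lemma rank_mul_of_inj_left {p q r : Type*} [Fintype p] [Fintype q] [Fintype r]
    (U : Matrix p q F) (M : Matrix q r F) (hU : Function.Injective U.mulVecLin) :
    (U * M).rank = M.rank := by
  rw [Matrix.rank, Matrix.rank, Matrix.mulVecLin_mul, LinearMap.range_comp]
  exact (Submodule.equivMapOfInjective _ hU _).finrank_eq.symm

lemma rank_mul_of_inj_right {p q r : Type*} [Fintype p] [Fintype q] [Fintype r]
    (M : Matrix p q F) (V : Matrix q r F) (hV : Function.Injective V.vecMulLinear) :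
    (M * V).rank = M.rank := by
  have hU : Function.Injective Vᵀ.mulVecLin := by
    rw [Matrix.mulVecLin_transpose]; exact hV
  rw [← Matrix.rank_transpose, Matrix.transpose_mul,
    rank_mul_of_inj_left _ _ hU, Matrix.rank_transpose]

lemma inj_fromBlocks {α β γ ζ : Type*} [Fintype α] [Fintype β] [Fintype γ] [Fintype ζ]
    (A : Matrix α β F) (D : Matrix γ ζ F)
    (hA : Function.Injective A.mulVecLin) (hD : Function.Injective D.mulVecLin) :
    Function.Injective (Matrix.fromBlocks A 0 0 D).mulVecLin := by
  classical
  rw [← LinearMap.ker_eq_bot, eq_bot_iff]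
  intro w hw
  have hw' : (Matrix.fromBlocks A 0 0 D) *ᵥ w = 0 := hw
  rw [Matrix.fromBlocks_mulVec] at hw'
  have h1 : A *ᵥ (w ∘ Sum.inl) = 0 := by
    funext i
    have := congrFun hw' (Sum.inl i)
    simpa using this
  have h2 : D *ᵥ (w ∘ Sum.inr) = 0 := by
    funext i
    have := congrFun hw' (Sum.inr i)
    simpa using this
  have e1 : w ∘ Sum.inl = 0 := by
    apply hA
    simpa [Matrix.mulVecLin_apply] using h1
  have e2 : w ∘ Sum.inr = 0 := by
    apply hD
    simpa [Matrix.mulVecLin_apply] using h2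
  have : w = 0 := by
    funext i
    cases i with
    | inl i => exact congrFun e1 i
    | inr i => exact congrFun e2 i
  simp [this]

lemma exists_rank_factorization {n m d : ℕ} (A : Matrix (Fin n) (Fin m) F)
    (hd : A.rank = d) :
    ∃ (An : Matrix (Fin n) (Fin d) F) (B : Matrix (Fin d) (Fin m) F),
      A = An * B ∧ Function.Injective An.mulVecLin ∧
      Function.Injective B.vecMulLinear := by
  classical
  set f := A.mulVecLin with hf
  have hb : Module.finrank F (LinearMap.range f) = d := hd
  let bR : Module.Basis (Fin d) F (LinearMap.range f) := Module.finBasisOfFinrankEq F _ hb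
  have hmem : ∀ j, Aᵀ j ∈ LinearMap.range f := fun j =>
    ⟨Pi.single j 1, by
      funext i
      simp [hf, Matrix.mulVecLin_apply]⟩
  set An : Matrix (Fin n) (Fin d) F := Matrix.of (fun i t => ((bR t : Fin n → F) i)) with hAn
  set B : Matrix (Fin d) (Fin m) F :=
    Matrix.of (fun t j => bR.repr ⟨Aᵀ j, hmem j⟩ t) with hB
  have hcoe : LinearIndependent F (fun t => ((bR t : Fin n → F))) :=
    bR.linearIndependent.map' (LinearMap.range f).subtype (Submodule.ker_subtype _)
  refine ⟨An, B, ?_, ?_, ?_⟩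
  · ext i j
    rw [Matrix.mul_apply]
    have hs := bR.sum_repr ⟨Aᵀ j, hmem j⟩
    have := congrArg (fun y : ↥(LinearMap.range f) => (y : Fin n → F) i) hs
    simp only [Submodule.coe_sum, Finset.sum_apply, SetLike.val_smul, Pi.smul_apply,
      smul_eq_mul] at this
    have hAt : A i j = Aᵀ j i := rfl
    rw [hAt, ← this]
    apply Finset.sum_congr rfl
    intro t _
    simp [hAn, hB, mul_comm]
  · rw [← LinearMap.ker_eq_bot, eq_bot_iff]
    intro w hw
    have hw' : An *ᵥ w = 0 := hw
    have hsum : ∑ t, w t • ((bR t : Fin n → F)) = 0 := by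
      funext i
      have := congrFun hw' i
      simpa [Matrix.mulVec, dotProduct, hAn, mul_comm] using this
    have hz := (Fintype.linearIndependent_iff.mp hcoe) w hsum
    have : w = 0 := funext hz
    simp [this]
  · have hBrank : B.rank = d := by
      apply le_antisymm
      · simpa using B.rank_le_card_height
      · calc d = A.rank := hd.symm
          _ = (An * B).rank := by
              congr 1
              ext i j
              rw [Matrix.mul_apply]
              have hs := bR.sum_repr ⟨Aᵀ j, hmem j⟩
              have := congrArg (fun y : ↥(LinearMap.range f) => (y : Fin n → F) i) hs
              simp only [Submodule.coe_sum, Finset.sum_apply, SetLike.val_smul, Pi.smul_apply,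
                smul_eq_mul] at this
              have hAt : A i j = Aᵀ j i := rfl
              rw [hAt, ← this]
              apply Finset.sum_congr rfl
              intro t _
              simp [hAn, hB, mul_comm]
          _ ≤ B.rank := Matrix.rank_mul_le_right _ _
    have : Function.Injective Bᵀ.mulVecLin := by
      apply inj_mulVecLin_of_rank_eq_card
      rw [Matrix.rank_transpose, hBrank, Fintype.card_fin]
    rwa [Matrix.mulVecLin_transpose] at this

end Aux

/-- if a rank-metric code contains codewords `x, x'` with
`rank(x' − x) = d`, then for all `μ, δ, ε ≥ 0` with `2ε + μ + δ ≥ d` and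
`μ + δ + ε ≤ d` there is a received tuple `(r, L, E)` for which
`rank [[L, r − x],[0, E]] = μ + δ + ε` while
`rank [[L, r − x'],[0, E]] = μ + δ + (d − μ − δ − ε) ≤ μ + δ + ε`; hence `x`
is not the unique minimizer and the errata pattern cannot be corrected. -/
theorem errata_pattern_not_correctable
    {F : Type*} [Field F] [Fintype F] {n m d : ℕ}
    (C : Set (Matrix (Fin n) (Fin m) F))
    (x x' : Matrix (Fin n) (Fin m) F) (hx : x ∈ C) (hx' : x' ∈ C)
    (hd : (x' - x).rank = d)
    (μ δ ε : ℕ) (h1 : d ≤ 2 * ε + μ + δ) (h2 : μ + δ + ε ≤ d) :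
    ∃ (r : Matrix (Fin n) (Fin m) F) (L : Matrix (Fin n) (Fin μ) F)
      (E : Matrix (Fin δ) (Fin m) F),
      L.rank = μ ∧ E.rank = δ ∧
      (Matrix.fromBlocks L (r - x) 0 E).rank = μ + δ + ε ∧
      (Matrix.fromBlocks L (r - x') 0 E).rank = μ + δ + (d - μ - δ - ε) ∧
      (Matrix.fromBlocks L (r - x') 0 E).rank ≤ μ + δ + ε := by
  classical
  obtain ⟨An, B, hfact, hAn, hB⟩ := exists_rank_factorization (x' - x) hd
  -- canonical building blocks
  set L0 : Matrix (Fin d) (Fin μ) F :=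
    Matrix.of (fun i j => if (i : ℕ) = j then 1 else 0) with hL0
  set E0 : Matrix (Fin δ) (Fin d) F :=
    Matrix.of (fun i j => if (j : ℕ) = μ + i then 1 else 0) with hE0
  set R1 : Matrix (Fin d) (Fin d) F :=
    Matrix.of (fun i j => if (i : ℕ) = j ∧ μ + δ ≤ (i : ℕ) ∧ (i : ℕ) < μ + δ + ε
      then 1 else 0) with hR1
  set r : Matrix (Fin n) (Fin m) F := x + An * (R1 * B) with hr
  set L : Matrix (Fin n) (Fin μ) F := An * L0 with hL
  set E : Matrix (Fin δ) (Fin m) F := E0 * B with hE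
  have hrx : r - x = An * (R1 * B) := by rw [hr]; abel
  have hrx' : r - x' = An * ((R1 - 1) * B) := by
    have h0 : r - x' = An * (R1 * B) - (x' - x) := by rw [hr]; abel
    rw [h0, hfact, Matrix.sub_mul, Matrix.one_mul, Matrix.mul_sub]
  set U : Matrix (Fin n ⊕ Fin δ) (Fin d ⊕ Fin δ) F :=
    Matrix.fromBlocks An 0 0 1 with hU
  set V : Matrix (Fin μ ⊕ Fin d) (Fin μ ⊕ Fin m) F :=
    Matrix.fromBlocks 1 0 0 B with hV
  have hUinj : Function.Injective U.mulVecLin := by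
    apply inj_fromBlocks _ _ hAn
    rw [Matrix.mulVecLin_one]
    exact fun a b h => h
  have hVinj : Function.Injective V.vecMulLinear := by
    have : Vᵀ = Matrix.fromBlocks 1 0 0 Bᵀ := by
      rw [hV, Matrix.fromBlocks_transpose]
      simp
    have h2' : Function.Injective Vᵀ.mulVecLin := by
      rw [this]
      apply inj_fromBlocks
      · rw [Matrix.mulVecLin_one]; exact fun a b h => h
      · rw [Matrix.mulVecLin_transpose]; exact hB
    rwa [Matrix.mulVecLin_transpose] at h2'
  have key : ∀ Z : Matrix (Fin d) (Fin d) F,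
      Matrix.fromBlocks (An * L0) (An * (Z * B)) 0 (E0 * B) =
        U * Matrix.fromBlocks L0 Z 0 E0 * V := by
    intro Z
    rw [hU, hV, Matrix.fromBlocks_multiply, Matrix.fromBlocks_multiply]
    simp [Matrix.mul_assoc]
  have rank_eq : ∀ Z : Matrix (Fin d) (Fin d) F,
      (Matrix.fromBlocks (An * L0) (An * (Z * B)) 0 (E0 * B)).rank =
        (Matrix.fromBlocks L0 Z 0 E0).rank := by
    intro Z
    rw [key Z, rank_mul_of_inj_right _ _ hVinj, rank_mul_of_inj_left _ _ hUinj]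
  have hμd : μ ≤ d := by omega
  have hμδd : μ + δ ≤ d := by omega
  -- rank L
  have hrankL0 : L0.rank = μ := by
    have := rank_eq_card_of_pivot (F := F) L0 (fun j => j)
      (fun j => (⟨j, lt_of_lt_of_le j.isLt hμd⟩ : Fin d))
      (by intro t; simp [hL0])
      (by intro s t hst
          have h0 : (s : ℕ) ≠ (t : ℕ) := fun hh => hst (Fin.ext hh)
          show (if ((s : ℕ) = (t : ℕ)) then (1 : F) else 0) = 0
          rw [if_neg h0])
      (by intro j
          exact Or.inr ⟨j, 1, by simp⟩)
    simpa using this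
  have hrankL : L.rank = μ := by
    rw [hL, rank_mul_of_inj_left _ _ hAn, hrankL0]
  -- rank E
  have hrankE0 : E0.rank = δ := by
    have := rank_eq_card_of_pivot (F := F) E0
      (fun i : Fin δ => (⟨μ + i, by have := i.isLt; omega⟩ : Fin d)) (fun i : Fin δ => i)
      (by intro t; simp [hE0])
      (by intro s t hst
          have h0 : (s : ℕ) ≠ (t : ℕ) := fun hh => hst (Fin.ext hh)
          show (if (μ + (t : ℕ) = μ + (s : ℕ)) then (1 : F) else 0) = 0
          rw [if_neg (by omega)])
      (by intro j
          by_cases hj : μ ≤ (j : ℕ) ∧ (j : ℕ) < μ + δ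
          · refine Or.inr ⟨⟨(j : ℕ) - μ, by omega⟩, 1, ?_⟩
            funext i
            have hi := i.isLt
            simp only [hE0, Matrix.of_apply, Pi.smul_apply, smul_eq_mul, one_mul]
            split_ifs <;> first | rfl | omega
          · refine Or.inl ?_
            funext i
            have hi := i.isLt
            simp only [hE0, Matrix.of_apply, Pi.zero_apply]
            split_ifs <;> first | rfl | omega)
    simpa using this
  have hrankE : E.rank = δ := by
    rw [hE, rank_mul_of_inj_right _ _ hB, hrankE0]
  -- rank of first big matrix
  have hrank1 : (Matrix.fromBlocks L0 R1 0 E0).rank = μ + δ + ε := by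
    have := rank_eq_card_of_pivot (F := F) (Matrix.fromBlocks L0 R1 0 E0)
      (fun t : Fin μ ⊕ Fin δ ⊕ Fin ε => match t with
        | Sum.inl j => Sum.inl j
        | Sum.inr (Sum.inl i) => Sum.inr (⟨μ + i, by have := i.isLt; omega⟩ : Fin d)
        | Sum.inr (Sum.inr t) => Sum.inr (⟨μ + δ + t, by have := t.isLt; omega⟩ : Fin d))
      (fun t : Fin μ ⊕ Fin δ ⊕ Fin ε => match t with
        | Sum.inl j => Sum.inl (⟨j, by have := j.isLt; omega⟩ : Fin d)
        | Sum.inr (Sum.inl i) => Sum.inr i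
        | Sum.inr (Sum.inr t) => Sum.inl (⟨μ + δ + t, by have := t.isLt; omega⟩ : Fin d))
      ?_ ?_ ?_
    · rw [this]; simp [Fintype.card_sum]; omega
    · rintro (j | i | t) <;>
        simp [hL0, hR1, hE0] <;> omega
    · rintro (j | i | t) (j' | i' | t') hst <;>
        simp only [hL0, hR1, hE0, Matrix.fromBlocks_apply₁₁, Matrix.fromBlocks_apply₁₂,
          Matrix.fromBlocks_apply₂₁, Matrix.fromBlocks_apply₂₂, Matrix.of_apply,
          Matrix.zero_apply, ne_eq, Sum.inl.injEq, Sum.inr.injEq, Fin.ext_iff] at hst ⊢ <;>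
        first
          | rfl
          | (rw [if_neg]; omega)
          | (rw [if_neg]; · rfl; omega)
    · rintro (j | b)
      · exact Or.inr ⟨Sum.inl j, 1, by simp⟩
      · have hb := b.isLt
        by_cases hb1 : μ ≤ (b : ℕ) ∧ (b : ℕ) < μ + δ
        · refine Or.inr ⟨Sum.inr (Sum.inl ⟨(b : ℕ) - μ, by omega⟩), 1, ?_⟩
          funext i
          rcases i with i | i <;>
            simp only [hL0, hR1, hE0, Matrix.fromBlocks_apply₁₂, Matrix.fromBlocks_apply₂₂,
              Matrix.of_apply, Pi.smul_apply, smul_eq_mul, one_mul] <;>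
            (try have := i.isLt) <;>
            split_ifs <;> first | rfl | omega
        · by_cases hb2 : μ + δ ≤ (b : ℕ) ∧ (b : ℕ) < μ + δ + ε
          · refine Or.inr ⟨Sum.inr (Sum.inr ⟨(b : ℕ) - μ - δ, by omega⟩), 1, ?_⟩
            funext i
            rcases i with i | i <;>
              simp only [hL0, hR1, hE0, Matrix.fromBlocks_apply₁₂, Matrix.fromBlocks_apply₂₂,
                Matrix.of_apply, Pi.smul_apply, smul_eq_mul, one_mul] <;>
              (try have := i.isLt) <;>
              split_ifs <;> first | rfl | omega
          · refine Or.inl ?_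
            funext i
            rcases i with i | i <;>
              simp only [hL0, hR1, hE0, Matrix.fromBlocks_apply₁₂, Matrix.fromBlocks_apply₂₂,
                Matrix.of_apply, Pi.zero_apply] <;>
              (try have := i.isLt) <;>
              split_ifs <;> first | rfl | omega
  -- rank of second big matrix
  have hrank2 : (Matrix.fromBlocks L0 (R1 - 1) 0 E0).rank = μ + δ + (d - μ - δ - ε) := by
    have := rank_eq_card_of_pivot (F := F) (Matrix.fromBlocks L0 (R1 - 1) 0 E0)
      (fun t : Fin μ ⊕ Fin δ ⊕ Fin (d - μ - δ - ε) => match t with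
        | Sum.inl j => Sum.inl j
        | Sum.inr (Sum.inl i) => Sum.inr (⟨μ + i, by have := i.isLt; omega⟩ : Fin d)
        | Sum.inr (Sum.inr t) => Sum.inr (⟨μ + δ + ε + t, by have := t.isLt; omega⟩ : Fin d))
      (fun t : Fin μ ⊕ Fin δ ⊕ Fin (d - μ - δ - ε) => match t with
        | Sum.inl j => Sum.inl (⟨j, by have := j.isLt; omega⟩ : Fin d)
        | Sum.inr (Sum.inl i) => Sum.inr i
        | Sum.inr (Sum.inr t) => Sum.inl (⟨μ + δ + ε + t, by have := t.isLt; omega⟩ : Fin d))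
      ?_ ?_ ?_
    · rw [this]; simp [Fintype.card_sum]; omega
    · rintro (j | i | t) <;>
        simp [hL0, hR1, hE0, Matrix.sub_apply, Matrix.one_apply, Fin.ext_iff] <;> omega
    · rintro (j | i | t) (j' | i' | t') hst <;>
        simp only [hL0, hR1, hE0, Matrix.fromBlocks_apply₁₁, Matrix.fromBlocks_apply₁₂,
          Matrix.fromBlocks_apply₂₁, Matrix.fromBlocks_apply₂₂, Matrix.of_apply,
          Matrix.zero_apply, Matrix.sub_apply, Matrix.one_apply, ne_eq, Sum.inl.injEq,
          Sum.inr.injEq, Fin.ext_iff] at hst ⊢ <;>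
        split_ifs <;> first | rfl | omega | simp | (exfalso; omega)
    · rintro (j | b)
      · exact Or.inr ⟨Sum.inl j, 1, by simp⟩
      · have hb := b.isLt
        by_cases hb0 : (b : ℕ) < μ
        · refine Or.inr ⟨Sum.inl ⟨(b : ℕ), hb0⟩, -1, ?_⟩
          funext i
          rcases i with i | i <;>
            simp only [hL0, hR1, hE0, Matrix.fromBlocks_apply₁₂, Matrix.fromBlocks_apply₂₂,
              Matrix.fromBlocks_apply₁₁, Matrix.fromBlocks_apply₂₁, Matrix.of_apply,
              Matrix.sub_apply, Matrix.one_apply, Matrix.zero_apply, Pi.smul_apply,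
              smul_eq_mul, Fin.ext_iff] <;>
            (try have := i.isLt) <;>
            split_ifs <;> first | ring1 | omega | (exfalso; omega)
        · by_cases hb1 : (b : ℕ) < μ + δ
          · refine Or.inr ⟨Sum.inr (Sum.inl ⟨(b : ℕ) - μ, by omega⟩), 1, ?_⟩
            funext i
            rcases i with i | i <;>
              simp only [hL0, hR1, hE0, Matrix.fromBlocks_apply₁₂, Matrix.fromBlocks_apply₂₂,
                Matrix.of_apply, Matrix.sub_apply, Matrix.one_apply, Pi.smul_apply,
                smul_eq_mul, Fin.ext_iff] <;>
              (try have := i.isLt) <;>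
              split_ifs <;> first | ring1 | omega | (exfalso; omega)
          · by_cases hb2 : (b : ℕ) < μ + δ + ε
            · refine Or.inl ?_
              funext i
              rcases i with i | i <;>
                simp only [hL0, hR1, hE0, Matrix.fromBlocks_apply₁₂, Matrix.fromBlocks_apply₂₂,
                  Matrix.of_apply, Matrix.sub_apply, Matrix.one_apply, Pi.zero_apply,
                  Fin.ext_iff] <;>
                (try have := i.isLt) <;>
                split_ifs <;> first | ring1 | omega | (exfalso; omega)
            · refine Or.inr ⟨Sum.inr (Sum.inr ⟨(b : ℕ) - μ - δ - ε, by omega⟩), 1, ?_⟩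
              funext i
              rcases i with i | i <;>
                simp only [hL0, hR1, hE0, Matrix.fromBlocks_apply₁₂, Matrix.fromBlocks_apply₂₂,
                  Matrix.of_apply, Matrix.sub_apply, Matrix.one_apply, Pi.smul_apply,
                  smul_eq_mul, Fin.ext_iff] <;>
                (try have := i.isLt) <;>
                split_ifs <;> first | ring1 | omega | (exfalso; omega)
  refine ⟨r, L, E, hrankL, hrankE, ?_, ?_, ?_⟩
  · rw [hrx, hL, hE, rank_eq R1, hrank1]
  · rw [hrx', hL, hE, rank_eq (R1 - 1), hrank2]
  · rw [hrx', hL, hE, rank_eq (R1 - 1), hrank2]; omega
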